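/- The class of prefix-independent, DBA-recognizable, half-positional objectives is closed under finite union: if W₁ and W₂ are prefix-independent, DBA-recognizable, and half-positional, then so is W₁ ∪ W₂. -/

import Mathlib

/-- Concatenate a finite word in front of an infinite word. -/
def extWord {C : Type} (w : List C) (s : ℕ → C) : ℕ → C :=
  fun n => if h : n < w.length then w.get ⟨n, h⟩ else s (n - w.length)

/-- Winning continuations `w⁻¹W` of a finite word `w` w.r.t. objective `W`. -/
def winCont {C : Type} (W : Set (ℕ → C)) (w : List C) : Set (ℕ → C) :=
  {s | extWord w s ∈ W}

/-- The run of a deterministic automaton from state `q` on infinite word `s`. -/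
def dbaRun {C Q : Type} (δ : Q → C → Q) (q : Q) (s : ℕ → C) : ℕ → Q
  | 0 => q
  | n + 1 => δ (dbaRun δ q s n) (s n)

/-- The set of infinite words accepted (Büchi condition on transitions `acc`) from state `q`. -/
def accFrom {C Q : Type} (δ : Q → C → Q) (acc : Q → C → Prop) (q : Q) : Set (ℕ → C) :=
  {s | ∀ N, ∃ n ≥ N, acc (dbaRun δ q s n) (s n)}

/-- Extension `δ*` of the transition function to finite words. -/
def dstar {C Q : Type} (δ : Q → C → Q) (q : Q) (w : List C) : Q := w.foldl δ q

/-- `Safe(q)`: finite words whose run from `q` takes no Büchi transition. -/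
def safeWords {C Q : Type} (δ : Q → C → Q) (acc : Q → C → Prop) (q : Q) : Set (List C) :=
  {w | ∀ (i : ℕ) (h : i < w.length), ¬ acc (dstar δ q (w.take i)) (w.get ⟨i, h⟩)}

/-- `SafeCycles(q)`: α-free words from `q` that return to `q`. -/
def safeCycles {C Q : Type} (δ : Q → C → Q) (acc : Q → C → Prop) (q : Q) : Set (List C) :=
  {w | w ∈ safeWords δ acc q ∧ dstar δ q w = q}

/-- A DBA is saturated if no strictly larger set of Büchi transitions recognizes the same language. -/
def Saturated {C Q : Type} (δ : Q → C → Q) (acc : Q → C → Prop) (qinit : Q) : Prop :=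
  ∀ acc' : Q → C → Prop, (∀ q c, acc q c → acc' q c) → acc' ≠ acc →
    accFrom δ acc' qinit ≠ accFrom δ acc qinit

/-- Prefix-independence of an objective. -/
def PrefixIndependent {C : Type} (W : Set (ℕ → C)) : Prop :=
  ∀ (w : List C) (s : ℕ → C), s ∈ W ↔ extWord w s ∈ W

/-- The Büchi condition: infinitely many letters in `F`. -/
def BuchiCond {C : Type} (F : Set C) : Set (ℕ → C) :=
  {s | ∀ N, ∃ n ≥ N, s n ∈ F}

/-- DBA-recognizability of an objective. -/
def DBARecognizable {C : Type} (W : Set (ℕ → C)) : Prop :=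
  ∃ (Q : Type) (_ : Fintype Q) (qinit : Q) (δ : Q → C → Q) (acc : Q → C → Prop),
    accFrom δ acc qinit = W

universe u

/-- An infinite play in an arena with edge set `E`. -/
def IsPlay {C : Type} {V : Type u} (E : Set (V × C × V)) (p : ℕ → V) (col : ℕ → C) : Prop :=
  ∀ n, (p n, col n, p (n + 1)) ∈ E

/-- A strategy of Player 1: from a history and the current vertex, choose a colored edge. -/
def Strat (C : Type) (V : Type u) : Type u := List (V × C) → V → C × V

/-- The history (sequence of visited vertices with emitted colors) after `n` steps. -/
def histPref {C : Type} {V : Type u} (p : ℕ → V) (col : ℕ → C) (n : ℕ) : List (V × C) :=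
  (List.range n).map fun i => (p i, col i)

/-- A strategy is valid if it always picks actual edges at Player-1 vertices. -/
def ValidStrat {C : Type} {V : Type u} (E : Set (V × C × V)) (own1 : V → Prop)
    (σ : Strat C V) : Prop :=
  ∀ h v, own1 v → (v, (σ h v).1, (σ h v).2) ∈ E

/-- A play is consistent with strategy `σ` if `σ`'s choices are followed at Player-1 vertices. -/
def ConsistentPlay {C : Type} {V : Type u} (own1 : V → Prop) (σ : Strat C V)
    (p : ℕ → V) (col : ℕ → C) : Prop :=
  ∀ n, own1 (p n) → (col n, p (n + 1)) = σ (histPref p col n) (p n)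

/-- `σ` is winning from `v` for objective `W`. -/
def WinningFrom {C : Type} {V : Type u} (W : Set (ℕ → C)) (E : Set (V × C × V))
    (own1 : V → Prop) (σ : Strat C V) (v : V) : Prop :=
  ∀ p col, IsPlay E p col → p 0 = v → ConsistentPlay own1 σ p col → col ∈ W

/-- A positional strategy only depends on the current vertex. -/
def PositionalStrat {C : Type} {V : Type u} (σ : Strat C V) : Prop :=
  ∀ h h' v, σ h v = σ h' v

/-- Player 1 has a single positional strategy, optimal in the arena `(E, own1)`. -/
def HalfPosArena {C : Type} {V : Type u} (W : Set (ℕ → C)) (E : Set (V × C × V))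
    (own1 : V → Prop) : Prop :=
  ∃ σ : Strat C V, ValidStrat E own1 σ ∧ PositionalStrat σ ∧
    ∀ v, (∃ τ : Strat C V, ValidStrat E own1 τ ∧ WinningFrom W E own1 τ v) →
      WinningFrom W E own1 σ v

/-- Half-positionality over all (non-blocking) arenas of any cardinality. -/
def HalfPositionalAll {C : Type} (W : Set (ℕ → C)) : Prop :=
  ∀ (V : Type u) (E : Set (V × C × V)) (own1 : V → Prop),
    (∀ v, ∃ c v', (v, c, v') ∈ E) → HalfPosArena W E own1

/-- Half-positionality over finite one-player (all vertices to Player 1) arenas. -/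
def HalfPosFinOnePlayer {C : Type} (W : Set (ℕ → C)) : Prop :=
  ∀ (V : Type) [Fintype V] (E : Set (V × C × V)),
    (∀ v, ∃ c v', (v, c, v') ∈ E) → HalfPosArena W E (fun _ => True)

namespace S11
variable {C : Type}

theorem extWord_lt {w : List C} {s : ℕ → C} {n : ℕ} (h : n < w.length) :
    extWord w s n = w.get ⟨n, h⟩ := dif_pos h

theorem extWord_ge {w : List C} {s : ℕ → C} {n : ℕ} (h : w.length ≤ n) :
    extWord w s n = s (n - w.length) := dif_neg (by omega)

/-- the first `N` letters of `s` as a list -/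
def pref (s : ℕ → C) (N : ℕ) : List C := (List.range N).map s

@[simp] theorem pref_length (s : ℕ → C) (N : ℕ) : (pref s N).length = N := by simp [pref]

/-- drop the first `N` letters -/
def wtail (s : ℕ → C) (N : ℕ) : ℕ → C := fun n => s (n + N)

theorem extWord_pref_wtail (s : ℕ → C) (N : ℕ) : extWord (pref s N) (wtail s N) = s := by
  funext n
  by_cases h : n < N
  · rw [extWord_lt (by simpa using h)]
    simp [pref]
  · rw [extWord_ge (by simpa using not_lt.mp h)]
    simp only [wtail, pref_length]
    congr 1; omega

theorem wtail_mem_iff {W : Set (ℕ → C)} (h : PrefixIndependent W)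
    (s : ℕ → C) (N : ℕ) : wtail s N ∈ W ↔ s ∈ W := by
  rw [h (pref s N) (wtail s N), extWord_pref_wtail]

/-- the periodic infinite word `u^ω` (with default letter `d`, irrelevant if `u ≠ []`). -/
def wpow (u : List C) (d : C) : ℕ → C := fun n => u.getD (n % u.length) d

theorem wpow_eq_getElem {u : List C} (hu : u ≠ []) (d : C) (n : ℕ) :
    wpow u d n = u[n % u.length]'(Nat.mod_lt _ (List.length_pos_iff.2 hu)) := by
  simp [wpow, List.getD_eq_getElem?_getD, List.getElem?_eq_getElem
    (Nat.mod_lt _ (List.length_pos_iff.2 hu))]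

theorem wpow_d_irrel {u : List C} (hu : u ≠ []) (d d' : C) : wpow u d = wpow u d' := by
  funext n; rw [wpow_eq_getElem hu, wpow_eq_getElem hu]

theorem rot_getElem {u v : List C} (huv : (u ++ v) ≠ []) {i : ℕ}
    (hi : i < u.length + v.length) (d : C) :
    (v ++ u).getD i d = (u ++ v).getD ((i + u.length) % (u.length + v.length)) d := by
  have hL : 0 < u.length + v.length := by
    have := List.length_pos_iff.2 huv; simpa [List.length_append] using this
  by_cases h : i < v.length
  · have h2 : i + u.length < u.length + v.length := by omega
    rw [Nat.mod_eq_of_lt h2]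
    rw [List.getD_eq_getElem _ _ (by simp [List.length_append]; omega),
        List.getD_eq_getElem _ _ (by simp [List.length_append]; omega)]
    rw [List.getElem_append_left h, List.getElem_append_right (by omega)]
    congr 1; omega
  · have h3 : (i + u.length) % (u.length + v.length) = i - v.length := by
      have heq : i + u.length - (u.length + v.length) = i - v.length := by omega
      rw [Nat.mod_eq_sub_mod (by omega), heq, Nat.mod_eq_of_lt (by omega)]
    rw [h3]
    rw [List.getD_eq_getElem _ _ (by simp [List.length_append]; omega),
        List.getD_eq_getElem _ _ (by simp [List.length_append]; omega)]
    rw [List.getElem_append_right (by omega), List.getElem_append_left (by omega)]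

/-- rotation: `u ⬝ (v u)^ω = (u v)^ω`. -/
theorem extWord_wpow_rot (u v : List C) (huv : (u ++ v) ≠ []) (d : C) :
    extWord u (wpow (v ++ u) d) = wpow (u ++ v) d := by
  have hL : 0 < u.length + v.length := by
    have := List.length_pos_iff.2 huv; simpa [List.length_append] using this
  funext n
  by_cases h : n < u.length
  · rw [extWord_lt h]
    have h1 : n % (u.length + v.length) = n := Nat.mod_eq_of_lt (by omega)
    simp only [wpow, List.length_append, h1]
    rw [List.getD_eq_getElem _ _ (by simp [List.length_append]; omega),
        List.getElem_append_left h]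
    simp
  · rw [extWord_ge (not_lt.mp h)]
    simp only [wpow, List.length_append]
    have comm : v.length + u.length = u.length + v.length := by omega
    rw [comm]
    have := rot_getElem (u := u) (v := v) huv
      (i := (n - u.length) % (u.length + v.length)) (Nat.mod_lt _ hL) d
    rw [this]
    congr 1
    conv_rhs => rw [show n = (n - u.length) + u.length by omega]
    exact (Nat.mod_modEq (n - u.length) _).add_right u.length

theorem PrefixIndependent.wpow_rot_iff {W : Set (ℕ → C)} (hpi : PrefixIndependent W)
    (u v : List C) (huv : (u ++ v) ≠ []) (d : C) :
    wpow (u ++ v) d ∈ W ↔ wpow (v ++ u) d ∈ W := by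
  rw [hpi u (wpow (v ++ u) d), extWord_wpow_rot u v huv d]

end S11
namespace S11
variable {C Q : Type}

theorem dstar_append (δ : Q → C → Q) (q : Q) (u v : List C) :
    dstar δ q (u ++ v) = dstar δ (dstar δ q u) v := by
  simp [dstar, List.foldl_append]

theorem dstar_concat (δ : Q → C → Q) (q : Q) (u : List C) (c : C) :
    dstar δ q (u ++ [c]) = δ (dstar δ q u) c := by
  rw [dstar_append]; rfl

theorem pref_succ (s : ℕ → C) (n : ℕ) : pref s (n + 1) = pref s n ++ [s n] := by
  simp [pref, List.range_succ]

theorem dbaRun_pref (δ : Q → C → Q) (q : Q) (s : ℕ → C) (n : ℕ) :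
    dbaRun δ q s n = dstar δ q (pref s n) := by
  induction n with
  | zero => rfl
  | succ n ih => rw [dbaRun, ih, pref_succ, dstar_concat]

theorem dbaRun_add (δ : Q → C → Q) (q : Q) (s : ℕ → C) (n : ℕ) :
    ∀ j, (∀ i < j, s (n + i) = s n) →
      dbaRun δ q s (n + j) = dbaRun δ (dbaRun δ q s n) (fun _ => s n) j := by
  intro j
  induction j with
  | zero => intro _; rfl
  | succ j ih =>
    intro h
    have h1 : n + (j + 1) = (n + j) + 1 := by omega
    rw [h1, dbaRun, dbaRun, ih (fun i hi => h i (by omega)), h j (by omega)]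

theorem extWord_run (δ : Q → C → Q) (q : Q) (w : List C) (s : ℕ → C) :
    ∀ i, dbaRun δ q (extWord w s) (w.length + i) = dbaRun δ (dstar δ q w) s i := by
  have base : dbaRun δ q (extWord w s) w.length = dstar δ q w := by
    rw [dbaRun_pref]
    congr 1
    apply List.ext_getElem
    · simp [pref]
    · intro i h1 h2
      simp only [pref, List.getElem_map, List.getElem_range]
      rw [extWord_lt (by simpa [pref] using h1)]
      simp
  intro i
  induction i with
  | zero => exact base
  | succ i ih =>
    have h1 : w.length + (i + 1) = (w.length + i) + 1 := by omega
    rw [h1, dbaRun, dbaRun, ih, extWord_ge (by omega)]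
    congr 2
    omega

theorem mem_accFrom_dstar (δ : Q → C → Q) (acc : Q → C → Prop) (q : Q) (w : List C)
    (s : ℕ → C) : s ∈ accFrom δ acc (dstar δ q w) ↔ extWord w s ∈ accFrom δ acc q := by
  constructor
  · intro h N
    obtain ⟨n, hn, hacc⟩ := h N
    refine ⟨w.length + n, by omega, ?_⟩
    rw [extWord_run, extWord_ge (by omega)]
    simpa using hacc
  · intro h N
    obtain ⟨n, hn, hacc⟩ := h (w.length + N)
    refine ⟨n - w.length, by omega, ?_⟩
    have h1 : n = w.length + (n - w.length) := by omega
    rw [← extWord_run δ q w s (n - w.length), ← h1]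
    have h2 : extWord w s n = s (n - w.length) := extWord_ge (by omega)
    rwa [h2] at hacc

theorem lang_reachable {δ : Q → C → Q} {acc : Q → C → Prop} {q0 : Q} {W : Set (ℕ → C)}
    (hrec : accFrom δ acc q0 = W) (hpi : PrefixIndependent W) (w : List C) :
    accFrom δ acc (dstar δ q0 w) = W := by
  ext s
  have h1 := mem_accFrom_dstar δ acc q0 w s
  rw [hrec] at h1
  show accFrom δ acc (dstar δ q0 w) s ↔ W s
  rw [show (accFrom δ acc (dstar δ q0 w) s) = (s ∈ accFrom δ acc (dstar δ q0 w)) from rfl, h1]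
  exact (hpi w s).symm

theorem cyc [Fintype Q] (δ : Q → C → Q) (acc : Q → C → Prop) (p : Q) (c : C)
    (hacc : (fun _ => c) ∈ accFrom δ acc p) :
    ∃ k < 2 * Fintype.card Q, acc (dbaRun δ p (fun _ => c) k) c := by
  set m := Fintype.card Q with hm
  have hm1 : 1 ≤ m := @Fintype.card_pos Q _ ⟨p⟩
  set ρ : ℕ → Q := dbaRun δ p (fun _ => c) with hρ
  -- pigeonhole on ρ 0 .. ρ m
  have : ∃ a b : Fin (m + 1), a ≠ b ∧ ρ a = ρ b := by
    have hcard : Fintype.card Q < Fintype.card (Fin (m + 1)) := by simp [hm]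
    obtain ⟨a, b, hab, h⟩ := Fintype.exists_ne_map_eq_of_card_lt (fun i : Fin (m+1) => ρ i) hcard
    exact ⟨a, b, hab, h⟩
  obtain ⟨a, b, hab, h⟩ := this
  -- wlog a < b
  obtain ⟨i, j, hij, hjm, hρij⟩ : ∃ i j : ℕ, i < j ∧ j ≤ m ∧ ρ i = ρ j := by
    rcases lt_or_gt_of_ne hab with hlt | hgt
    · exact ⟨a, b, hlt, Nat.lt_succ_iff.mp b.2, h⟩
    · exact ⟨b, a, hgt, Nat.lt_succ_iff.mp a.2, h.symm⟩
  set d := j - i with hd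
  have hd0 : 0 < d := by omega
  have hper : ∀ t, ρ (i + t + d) = ρ (i + t) := by
    intro t
    induction t with
    | zero =>
      rw [show i + 0 + d = j by omega, show i + 0 = i by omega]
      exact hρij.symm
    | succ t ih =>
      have e1 : i + (t+1) + d = (i + t + d) + 1 := by omega
      have e2 : i + (t+1) = (i + t) + 1 := by omega
      rw [e1, e2, hρ, dbaRun, dbaRun, ← hρ, ih]
  have hmul : ∀ t q', ρ (i + t + q' * d) = ρ (i + t) := by
    intro t q'
    induction q' with
    | zero => simp
    | succ q' ih =>
      have e1 : i + t + (q' + 1) * d = (i + (t + q' * d)) + d := by ring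
      rw [e1, hper (t + q' * d), show i + (t + q' * d) = i + t + q' * d by omega, ih]
  obtain ⟨K, hK, haccK⟩ := hacc i
  set t := K - i with ht
  have hmod : t % d < d := Nat.mod_lt _ hd0
  refine ⟨i + t % d, by omega, ?_⟩
  have : ρ (i + t % d) = ρ K := by
    have hmd := Nat.mod_add_div' t d
    have e1 : K = i + t % d + (t / d) * d := by omega
    rw [e1, hmul]
  rw [hρ] at this ⊢
  rw [this]
  exact haccK

theorem block [Fintype Q] {δ : Q → C → Q} {acc : Q → C → Prop} {q0 : Q} {W : Set (ℕ → C)}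
    (hrec : accFrom δ acc q0 = W) (hpi : PrefixIndependent W) (u : ℕ → C)
    (H : ∀ N, ∃ n ≥ N, (∀ i < 2 * Fintype.card Q, u (n + i) = u n) ∧ (fun _ => u n) ∈ W) :
    u ∈ W := by
  rw [← hrec]
  intro N
  obtain ⟨n, hn, hblk, hcw⟩ := H N
  set p := dbaRun δ q0 u n with hp
  have hlang : accFrom δ acc p = W := by
    rw [hp, dbaRun_pref]; exact lang_reachable hrec hpi _
  have hconst : (fun _ => u n) ∈ accFrom δ acc p := by rw [hlang]; exact hcw
  obtain ⟨k, hk, hacck⟩ := cyc δ acc p (u n) hconst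
  refine ⟨n + k, by omega, ?_⟩
  rw [dbaRun_add δ q0 u n k (fun i hi => hblk i (by omega)), hblk k hk]
  exact hacck

theorem succ_mod {ℓ k : ℕ} (hℓ : 0 < ℓ) :
    ((k+1) % ℓ = k % ℓ + 1 ∧ k % ℓ + 1 < ℓ) ∨ ((k+1) % ℓ = 0 ∧ k % ℓ + 1 = ℓ) := by
  have h1 : (k + 1) % ℓ = (k % ℓ + 1) % ℓ := by
    conv_lhs => rw [show k = ℓ * (k / ℓ) + k % ℓ from (Nat.div_add_mod k ℓ).symm]
    rw [Nat.add_assoc, Nat.mul_add_mod]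
  have h2 : k % ℓ < ℓ := Nat.mod_lt _ hℓ
  by_cases hc : k % ℓ + 1 = ℓ
  · right
    refine ⟨?_, hc⟩
    rw [h1, hc, Nat.mod_self]
  · left; rw [h1, Nat.mod_eq_of_lt (by omega)]; exact ⟨rfl, by omega⟩

theorem exists_bad_cycle [Fintype Q] {δ : Q → C → Q} {acc : Q → C → Prop} {q0 : Q}
    {W : Set (ℕ → C)} (hrec : accFrom δ acc q0 = W) (hpi : PrefixIndependent W)
    {F : Set C} (t : ℕ → C) (ht : t ∉ W) (hgood : ∀ N, ∃ n ≥ N, t n ∈ F) :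
    ∃ (v : List C) (d : C), v ≠ [] ∧ (∃ i, ∃ hi : i < v.length, v[i]'hi ∈ F) ∧ wpow v d ∉ W := by
  set run : ℕ → Q := dbaRun δ q0 t with hrun
  have ht' : t ∉ accFrom δ acc q0 := by rw [hrec]; exact ht
  have hN0 : ∃ N₀, ∀ n ≥ N₀, ¬ acc (run n) (t n) := by
    by_contra hcon
    push_neg at hcon
    exact ht' (fun N => hcon N)
  obtain ⟨N₀, hN₀⟩ := hN0
  obtain ⟨q, hq⟩ := Finite.exists_infinite_fiber run
  have hinf : {n | run n = q}.Infinite := Set.infinite_coe_iff.mp hq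
  obtain ⟨n₁, hn₁mem, hn₁⟩ := hinf.exists_gt N₀
  obtain ⟨g, hg, hgF⟩ := hgood (n₁ + 1)
  obtain ⟨n₂, hn₂mem, hn₂⟩ := hinf.exists_gt g
  have hq₁ : run n₁ = q := hn₁mem
  have hq₂ : run n₂ = q := hn₂mem
  set ℓ := n₂ - n₁ with hℓdef
  have hℓ : 0 < ℓ := by omega
  set v : List C := (List.range ℓ).map (fun i => t (n₁ + i)) with hv
  have hvlen : v.length = ℓ := by simp [hv]
  have hvne : v ≠ [] := by
    intro hcon; rw [hcon] at hvlen; simp at hvlen; omega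
  have hvget : ∀ i (h : i < ℓ), v[i]'(by omega) = t (n₁ + i) := by
    intro i h; simp [hv]
  refine ⟨v, t n₁, hvne, ⟨g - n₁, by omega, ?_⟩, ?_⟩
  · rw [hvget (g - n₁) (by omega), show n₁ + (g - n₁) = g by omega]
    exact hgF
  · -- run of v^ω from q is acc-free
    have hwp : ∀ k, wpow v (t n₁) k = t (n₁ + k % ℓ) := by
      intro k
      simp only [wpow, hvlen]
      rw [List.getD_eq_getElem _ _ (by rw [hvlen]; exact Nat.mod_lt _ hℓ)]
      exact hvget _ (Nat.mod_lt _ hℓ)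
    have hrunv : ∀ k, dbaRun δ q (wpow v (t n₁)) k = run (n₁ + k % ℓ) := by
      intro k
      induction k with
      | zero => simp [dbaRun, hq₁.symm]
      | succ k ih =>
        rw [dbaRun, ih, hwp k]
        have step : δ (run (n₁ + k % ℓ)) (t (n₁ + k % ℓ)) = run (n₁ + k % ℓ + 1) := rfl
        rw [step]
        rcases succ_mod (k := k) hℓ with ⟨h1, h2⟩ | ⟨h1, h2⟩
        · rw [h1, show n₁ + (k % ℓ + 1) = n₁ + k % ℓ + 1 by omega]
        · rw [h1]
          have : n₁ + k % ℓ + 1 = n₂ := by omega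
          rw [this]; simp [hq₂, hq₁]
    have hqlang : accFrom δ acc q = W := by
      rw [← hq₁, hrun, dbaRun_pref]
      exact lang_reachable hrec hpi _
    rw [← hqlang]
    intro hmem
    obtain ⟨k, _, hacck⟩ := hmem 0
    rw [hrunv k, hwp k] at hacck
    exact hN₀ _ (by omega) hacck

end S11
namespace S11
variable {C : Type}

@[simp] theorem histPref_length {V : Type u} (p : ℕ → V) (col : ℕ → C) (n : ℕ) :
    (histPref p col n).length = n := by simp [histPref]

/-- If `s ∈ W` then arbitrarily late letters of `s` are "good": their constant word is in `W`. -/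
theorem good_letter_of_mem {W : Set (ℕ → C)} (hpi : PrefixIndependent W)
    (hHP : HalfPositionalAll.{u} W) {s : ℕ → C} (hs : s ∈ W) (N : ℕ) :
    ∃ n ≥ N, (fun _ => s n) ∈ W := by
  set s' := wtail s N with hs'def
  have hs' : s' ∈ W := (wtail_mem_iff hpi s N).mpr hs
  set V := PUnit.{u+1}
  set E : Set (V × C × V) := {e | ∃ n, e = (PUnit.unit, s' n, PUnit.unit)} with hE
  have hnb : ∀ v : V, ∃ c v', (v, c, v') ∈ E := by
    intro v; exact ⟨s' 0, PUnit.unit, ⟨0, by cases v; rfl⟩⟩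
  obtain ⟨σ, hσval, hσpos, hσopt⟩ := hHP V E (fun _ => True) hnb
  have hτ : ∃ τ : Strat C V, ValidStrat E (fun _ => True) τ ∧
      WinningFrom W E (fun _ => True) τ PUnit.unit := by
    refine ⟨fun h _ => (s' h.length, PUnit.unit), fun h v _ => ⟨h.length, rfl⟩, ?_⟩
    intro p col hplay h0 hcons
    have hcol : ∀ n, col n = s' n := by
      intro n
      have h1 := hcons n trivial
      have h2 : (col n, p (n + 1)) = (s' n, PUnit.unit) := by simpa using h1
      exact congrArg Prod.fst h2
    have : col = s' := funext hcol
    rwa [this]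
  have hwin := hσopt PUnit.unit hτ
  set e := σ [] PUnit.unit with he_def
  have he : (PUnit.unit, e.1, e.2) ∈ E := hσval [] PUnit.unit trivial
  obtain ⟨n₀, hn₀⟩ := he
  have he1 : e.1 = s' n₀ := by
    have := congrArg (fun x => x.2.1) hn₀
    simpa using this
  have hplay : IsPlay E (fun _ => PUnit.unit) (fun _ => e.1) := by
    intro n; exact ⟨n₀, by rw [he1]⟩
  have hcons : ConsistentPlay (fun _ => True) σ (fun _ => PUnit.unit) (fun _ => e.1) := by
    intro n _
    rw [hσpos (histPref (fun _ => PUnit.unit) (fun _ => e.1) n) [] PUnit.unit, ← he_def]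
  have hmem := hwin (fun _ => PUnit.unit) (fun _ => e.1) hplay rfl hcons
  refine ⟨n₀ + N, by omega, ?_⟩
  rw [he1] at hmem
  exact hmem

end S11
namespace S11
variable {C : Type}

theorem ulift_eq_iff {α : Type} {a b : α} : (⟨a⟩ : ULift.{u} α) = ⟨b⟩ ↔ a = b :=
  ⟨fun h => congrArg ULift.down h, fun h => congrArg ULift.up h⟩

/-! ### The bouquet arena: one Player-1 vertex with two loops spelling `u₁` and `u₂`. -/

def bstar : ULift.{u} (ℕ ⊕ ℕ) := ⟨Sum.inl 0⟩

def bnx₁ (n₁ j : ℕ) : ULift.{u} (ℕ ⊕ ℕ) := if j + 1 < n₁ then ⟨Sum.inl (j+1)⟩ else bstar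

def bnx₂ (n₂ j : ℕ) : ULift.{u} (ℕ ⊕ ℕ) := if j + 1 < n₂ then ⟨Sum.inr (j+1)⟩ else bstar

def bE (u₁ u₂ : List C) (d : C) : Set (ULift.{u} (ℕ ⊕ ℕ) × C × ULift.{u} (ℕ ⊕ ℕ)) :=
  {e | (∃ j < u₁.length, e = (⟨Sum.inl j⟩, u₁.getD j d, bnx₁ u₁.length j))
     ∨ (∃ j, 0 < j ∧ j < u₂.length ∧ e = (⟨Sum.inr j⟩, u₂.getD j d, bnx₂ u₂.length j))
     ∨ e = (bstar, u₂.getD 0 d, bnx₂ u₂.length 0)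
     ∨ (∃ j, u₁.length ≤ j ∧ e = (⟨Sum.inl j⟩, d, ⟨Sum.inl j⟩))
     ∨ (∃ j, (j = 0 ∨ u₂.length ≤ j) ∧ e = (⟨Sum.inr j⟩, d, ⟨Sum.inr j⟩))}

theorem bE_nonblock (u₁ u₂ : List C) (d : C) :
    ∀ v, ∃ c v', (v, c, v') ∈ bE.{u} u₁ u₂ d := by
  rintro ⟨j | j⟩
  · by_cases hj : j < u₁.length
    · exact ⟨_, _, Or.inl ⟨j, hj, rfl⟩⟩
    · exact ⟨d, _, Or.inr (Or.inr (Or.inr (Or.inl ⟨j, by omega, rfl⟩)))⟩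
  · by_cases hj : 0 < j ∧ j < u₂.length
    · exact ⟨_, _, Or.inr (Or.inl ⟨j, hj.1, hj.2, rfl⟩)⟩
    · exact ⟨d, _, Or.inr (Or.inr (Or.inr (Or.inr ⟨j, by omega, rfl⟩)))⟩

theorem bE_star {u₁ u₂ : List C} {d : C} {c : C} {w : ULift.{u} (ℕ ⊕ ℕ)}
    (h1 : u₁ ≠ []) (h : (bstar, c, w) ∈ bE.{u} u₁ u₂ d) :
    (c = u₁.getD 0 d ∧ w = bnx₁ u₁.length 0) ∨ (c = u₂.getD 0 d ∧ w = bnx₂ u₂.length 0) := by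
  have h1' : 0 < u₁.length := List.length_pos_iff.2 h1
  rcases h with ⟨j, hj, he⟩ | ⟨j, hj0, hj, he⟩ | he | ⟨j, hj, he⟩ | ⟨j, hj, he⟩
  · simp only [bstar, Prod.mk.injEq, ulift_eq_iff, Sum.inl.injEq] at he
    obtain ⟨hj0, hc, hw⟩ := he
    subst hj0
    exact Or.inl ⟨hc, hw⟩
  · simp only [bstar, Prod.mk.injEq, ulift_eq_iff] at he
    exact absurd he.1 (by simp)
  · simp only [bstar, Prod.mk.injEq] at he
    exact Or.inr ⟨he.2.1, he.2.2⟩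
  · simp only [bstar, Prod.mk.injEq, ulift_eq_iff, Sum.inl.injEq] at he
    omega
  · simp only [bstar, Prod.mk.injEq, ulift_eq_iff] at he
    exact absurd he.1 (by simp)

theorem bE_inl {u₁ u₂ : List C} {d : C} {j : ℕ} {c : C} {w : ULift.{u} (ℕ ⊕ ℕ)}
    (h0 : 0 < j) (hj : j < u₁.length)
    (h : ((⟨Sum.inl j⟩ : ULift.{u} (ℕ ⊕ ℕ)), c, w) ∈ bE.{u} u₁ u₂ d) :
    c = u₁.getD j d ∧ w = bnx₁ u₁.length j := by
  rcases h with ⟨j', hj', he⟩ | ⟨j', hj0', hj', he⟩ | he | ⟨j', hj', he⟩ | ⟨j', hj', he⟩ <;>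
    simp only [bstar, Prod.mk.injEq, ulift_eq_iff, Sum.inl.injEq] at he
  · obtain ⟨hjj, hc, hw⟩ := he; subst hjj; exact ⟨hc, hw⟩
  · exact absurd he.1 (by simp)
  · omega
  · omega
  · exact absurd he.1 (by simp)

theorem bE_inr {u₁ u₂ : List C} {d : C} {j : ℕ} {c : C} {w : ULift.{u} (ℕ ⊕ ℕ)}
    (h0 : 0 < j) (hj : j < u₂.length)
    (h : ((⟨Sum.inr j⟩ : ULift.{u} (ℕ ⊕ ℕ)), c, w) ∈ bE.{u} u₁ u₂ d) :
    c = u₂.getD j d ∧ w = bnx₂ u₂.length j := by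
  rcases h with ⟨j', hj', he⟩ | ⟨j', hj0', hj', he⟩ | he | ⟨j', hj', he⟩ | ⟨j', hj', he⟩ <;>
    simp only [bstar, Prod.mk.injEq, ulift_eq_iff, Sum.inr.injEq] at he
  · exact absurd he.1 (by simp)
  · obtain ⟨hjj, hc, hw⟩ := he; subst hjj; exact ⟨hc, hw⟩
  · exact absurd he.1 (by simp)
  · exact absurd he.1 (by simp)
  · omega

/-- the mix strategy, playing `(u₁ u₂)^ω` from `bstar`. -/
def bτ (u₁ u₂ : List C) (d : C) : Strat C (ULift.{u} (ℕ ⊕ ℕ)) := fun h v =>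
  match v.down with
  | Sum.inl j =>
    if j = 0 then
      (if h.length % (u₁.length + u₂.length) = 0
       then (u₁.getD 0 d, bnx₁ u₁.length 0)
       else (u₂.getD 0 d, bnx₂ u₂.length 0))
    else if j < u₁.length then (u₁.getD j d, bnx₁ u₁.length j)
    else (d, ⟨Sum.inl j⟩)
  | Sum.inr j =>
    if 0 < j ∧ j < u₂.length then (u₂.getD j d, bnx₂ u₂.length j) else (d, ⟨Sum.inr j⟩)

theorem bτ_valid (u₁ u₂ : List C) (d : C) (h1 : u₁ ≠ []) :
    ValidStrat (bE.{u} u₁ u₂ d) (fun _ => True) (bτ.{u} u₁ u₂ d) := by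
  have h1' : 0 < u₁.length := List.length_pos_iff.2 h1
  rintro h ⟨j | j⟩ -
  · by_cases hj0 : j = 0
    · subst hj0
      by_cases hl : h.length % (u₁.length + u₂.length) = 0
      · simp only [bτ, hl, if_pos rfl, if_true]
        exact Or.inl ⟨0, h1', rfl⟩
      · simp only [bτ, hl, if_pos rfl, if_false]
        exact Or.inr (Or.inr (Or.inl rfl))
    · by_cases hj : j < u₁.length
      · simp only [bτ, if_neg hj0, if_pos hj]
        exact Or.inl ⟨j, hj, rfl⟩
      · simp only [bτ, if_neg hj0, if_neg hj]
        exact Or.inr (Or.inr (Or.inr (Or.inl ⟨j, by omega, rfl⟩)))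
  · by_cases hj : 0 < j ∧ j < u₂.length
    · simp only [bτ, if_pos hj]
      exact Or.inr (Or.inl ⟨j, hj.1, hj.2, rfl⟩)
    · simp only [bτ, if_neg hj]
      exact Or.inr (Or.inr (Or.inr (Or.inr ⟨j, by omega, rfl⟩)))

/-- the vertex visited at mix-position `r` (for `r < L`). -/
def bvtx (n₁ : ℕ) (r : ℕ) : ULift.{u} (ℕ ⊕ ℕ) :=
  if r < n₁ then ⟨Sum.inl r⟩ else if r = n₁ then bstar else ⟨Sum.inr (r - n₁)⟩

theorem bτ_step (u₁ u₂ : List C) (d : C) (h1 : u₁ ≠ []) (h2 : u₂ ≠ []) (k : ℕ)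
    (h : List (ULift.{u} (ℕ ⊕ ℕ) × C)) (hh : h.length = k) :
    bτ.{u} u₁ u₂ d h (bvtx u₁.length (k % (u₁.length + u₂.length)))
      = ((u₁ ++ u₂).getD (k % (u₁.length + u₂.length)) d,
         bvtx u₁.length ((k+1) % (u₁.length + u₂.length))) := by
  have h1' : 0 < u₁.length := List.length_pos_iff.2 h1
  have h2' : 0 < u₂.length := List.length_pos_iff.2 h2
  have hL' : 0 < u₁.length + u₂.length := by omega
  have hsucc := succ_mod (ℓ := u₁.length + u₂.length) (k := k) hL'
  obtain ⟨r, hr⟩ : ∃ r, k % (u₁.length + u₂.length) = r := ⟨_, rfl⟩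
  rw [hr] at hsucc ⊢
  have hrL : r < u₁.length + u₂.length := hr ▸ Nat.mod_lt _ hL'
  obtain ⟨r', hr'⟩ : ∃ r', (k + 1) % (u₁.length + u₂.length) = r' := ⟨_, rfl⟩
  rw [hr'] at hsucc ⊢
  by_cases hc1 : r < u₁.length
  · rw [show bvtx u₁.length r = ⟨Sum.inl r⟩ from if_pos hc1]
    have hcol : (u₁ ++ u₂).getD r d = u₁.getD r d := List.getD_append _ _ _ _ hc1
    by_cases hr0 : r = 0
    · subst hr0
      simp only [bτ, if_pos rfl, hh, hr, if_true, hcol]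
      refine Prod.ext rfl ?_
      simp only [bnx₁, bvtx, bstar]
      split_ifs <;>
        first
          | rfl
          | (exfalso; omega)
          | (rw [ulift_eq_iff, Sum.inl.injEq]; omega)
          | (rw [ulift_eq_iff, Sum.inr.injEq]; omega)
          | (rw [ulift_eq_iff]; exfalso; omega)
    · simp only [bτ, if_neg hr0, if_pos hc1, hcol]
      refine Prod.ext rfl ?_
      simp only [bnx₁, bvtx, bstar]
      split_ifs <;>
        first
          | rfl
          | (exfalso; omega)
          | (rw [ulift_eq_iff, Sum.inl.injEq]; omega)
          | (rw [ulift_eq_iff, Sum.inr.injEq]; omega)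
          | (rw [ulift_eq_iff]; exfalso; omega)
  · by_cases hc2 : r = u₁.length
    · rw [show bvtx u₁.length r = bstar by rw [bvtx, if_neg hc1, if_pos hc2]]
      have hne : r ≠ 0 := by omega
      have hcol : (u₁ ++ u₂).getD r d = u₂.getD 0 d := by
        rw [List.getD_append_right _ _ _ _ (by omega)]
        congr 1
        omega
      simp only [bτ, bstar, if_pos rfl, hh, hr, if_neg hne, hcol]
      refine Prod.ext rfl ?_
      simp only [bnx₂, bvtx, bstar]
      split_ifs <;>
        first
          | rfl
          | (exfalso; omega)
          | (rw [ulift_eq_iff, Sum.inl.injEq]; omega)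
          | (rw [ulift_eq_iff, Sum.inr.injEq]; omega)
          | (rw [ulift_eq_iff]; exfalso; omega)
    · have hrn : u₁.length < r := by omega
      have hj0 : 0 < r - u₁.length := by omega
      have hjn : r - u₁.length < u₂.length := by omega
      rw [show bvtx u₁.length r = ⟨Sum.inr (r - u₁.length)⟩ by
        rw [bvtx, if_neg hc1, if_neg hc2]]
      have hcol : (u₁ ++ u₂).getD r d = u₂.getD (r - u₁.length) d := by
        rw [List.getD_append_right _ _ _ _ (by omega)]
      simp only [bτ, if_pos (And.intro hj0 hjn), hcol]
      refine Prod.ext rfl ?_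
      simp only [bnx₂, bvtx, bstar]
      split_ifs <;>
        first
          | rfl
          | (exfalso; omega)
          | (rw [ulift_eq_iff, Sum.inl.injEq]; omega)
          | (rw [ulift_eq_iff, Sum.inr.injEq]; omega)
          | (rw [ulift_eq_iff]; exfalso; omega)

theorem bτ_wins {W : Set (ℕ → C)} (u₁ u₂ : List C) (d : C) (h1 : u₁ ≠ []) (h2 : u₂ ≠ [])
    (hmix : wpow (u₁ ++ u₂) d ∈ W) :
    WinningFrom W (bE.{u} u₁ u₂ d) (fun _ => True) (bτ.{u} u₁ u₂ d) bstar := by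
  intro p col hplay h0 hcons
  set n₁ := u₁.length
  set L := n₁ + u₂.length with hL
  have hvtx : ∀ k, p k = bvtx n₁ (k % L) := by
    intro k
    induction k with
    | zero =>
      rw [h0, bvtx]
      rw [if_pos (by exact List.length_pos_iff.2 h1)]
      rfl
    | succ k ih =>
      have hc := hcons k trivial
      rw [ih, bτ_step u₁ u₂ d h1 h2 k _ (histPref_length p col k)] at hc
      exact congrArg Prod.snd hc
  have hcol : ∀ k, col k = (u₁ ++ u₂).getD (k % L) d := by
    intro k
    have hc := hcons k trivial
    rw [hvtx k, bτ_step u₁ u₂ d h1 h2 k _ (histPref_length p col k)] at hc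
    exact congrArg Prod.fst hc
  have : col = wpow (u₁ ++ u₂) d := by
    funext k
    rw [hcol k, wpow]
    congr 2
    simp [hL]
    rfl
  rwa [this]

/-- KEY LEMMA: if a mix of two loops is winning, one of the pure loops is winning. -/
theorem bouquet {W : Set (ℕ → C)} (hHP : HalfPositionalAll.{u} W) (u₁ u₂ : List C) (d : C)
    (h1 : u₁ ≠ []) (h2 : u₂ ≠ []) (hmix : wpow (u₁ ++ u₂) d ∈ W) :
    wpow u₁ d ∈ W ∨ wpow u₂ d ∈ W := by
  have h1' : 0 < u₁.length := List.length_pos_iff.2 h1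
  have h2' : 0 < u₂.length := List.length_pos_iff.2 h2
  obtain ⟨σ, hval, hpos, hopt⟩ := hHP _ (bE.{u} u₁ u₂ d) (fun _ => True) (bE_nonblock u₁ u₂ d)
  have hwin := hopt bstar ⟨bτ.{u} u₁ u₂ d, bτ_valid u₁ u₂ d h1, bτ_wins u₁ u₂ d h1 h2 hmix⟩
  have hsE := hval [] bstar trivial
  rcases bE_star h1 hsE with ⟨hc, hw⟩ | ⟨hc, hw⟩
  · -- σ plays loop 1 forever
    left
    set pA : ℕ → ULift.{u} (ℕ ⊕ ℕ) := fun k => ⟨Sum.inl (k % u₁.length)⟩ with hpA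
    set colA : ℕ → C := fun k => u₁.getD (k % u₁.length) d with hcolA
    have hstep : ∀ k, σ (histPref pA colA k) (pA k) = (colA k, pA (k+1)) := by
      intro k
      rw [hpos (histPref pA colA k) [] (pA k)]
      have hsm := succ_mod (ℓ := u₁.length) (k := k) h1'
      have hnx : bnx₁ u₁.length (k % u₁.length) = pA (k + 1) := by
        simp only [bnx₁, hpA]
        rcases hsm with ⟨hs1, hs2⟩ | ⟨hs1, hs2⟩
        · rw [if_pos (by omega), hs1]
        · rw [if_neg (by omega), hs1, bstar]
      by_cases hk0 : k % u₁.length = 0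
      · have : pA k = bstar := by simp only [hpA, hk0]; rfl
        rw [this]
        have : σ [] bstar = (colA k, pA (k+1)) := by
          refine Prod.ext ?_ ?_
          · rw [hc]; simp only [hcolA, hk0]
          · rw [hw, ← hnx, hk0]
        rw [this]
      · have hkpos : 0 < k % u₁.length := by omega
        have hklt : k % u₁.length < u₁.length := Nat.mod_lt _ h1'
        have hEmem := hval [] (pA k) trivial
        rw [hpA] at hEmem
        obtain ⟨hc', hw'⟩ := bE_inl hkpos hklt hEmem
        refine Prod.ext ?_ ?_
        · rw [hc']
        · rw [hw', hnx]
    have hplay : IsPlay (bE.{u} u₁ u₂ d) pA colA := by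
      intro k
      have h9 := hval [] (pA k) trivial
      have h8 := hstep k
      rw [hpos (histPref pA colA k) [] (pA k)] at h8
      rw [show colA k = (σ [] (pA k)).1 from (congrArg Prod.fst h8).symm,
          show pA (k+1) = (σ [] (pA k)).2 from (congrArg Prod.snd h8).symm]
      exact h9
    have hconsA : ConsistentPlay (fun _ => True) σ pA colA := by
      intro k _
      exact (hstep k).symm
    have h0A : pA 0 = bstar := by simp only [hpA, Nat.zero_mod]; rfl
    have := hwin pA colA hplay h0A hconsA
    have hcw : colA = wpow u₁ d := rfl
    rwa [hcw] at this
  · -- σ plays loop 2 forever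
    right
    set pB : ℕ → ULift.{u} (ℕ ⊕ ℕ) :=
      fun k => if k % u₂.length = 0 then bstar else ⟨Sum.inr (k % u₂.length)⟩ with hpB
    set colB : ℕ → C := fun k => u₂.getD (k % u₂.length) d with hcolB
    have hstep : ∀ k, σ (histPref pB colB k) (pB k) = (colB k, pB (k+1)) := by
      intro k
      rw [hpos (histPref pB colB k) [] (pB k)]
      have hsm := succ_mod (ℓ := u₂.length) (k := k) h2'
      have hnx : bnx₂ u₂.length (k % u₂.length) = pB (k + 1) := by
        simp only [bnx₂, hpB]
        rcases hsm with ⟨hs1, hs2⟩ | ⟨hs1, hs2⟩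
        · rw [if_pos (by omega), hs1, if_neg (by omega)]
        · rw [if_neg (by omega), hs1, if_pos rfl]
      by_cases hk0 : k % u₂.length = 0
      · have hpk : pB k = bstar := by simp [hpB, hk0]
        rw [hpk]
        have : σ [] bstar = (colB k, pB (k+1)) := by
          refine Prod.ext ?_ ?_
          · rw [hc]; simp only [hcolB, hk0]
          · rw [hw, ← hnx, hk0]
        rw [this]
      · have hkpos : 0 < k % u₂.length := by omega
        have hklt : k % u₂.length < u₂.length := Nat.mod_lt _ h2'
        have hpk : pB k = ⟨Sum.inr (k % u₂.length)⟩ := by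
          simp [hpB, hk0]
        have hEmem := hval [] (pB k) trivial
        rw [hpk] at hEmem ⊢
        obtain ⟨hc', hw'⟩ := bE_inr hkpos hklt hEmem
        refine Prod.ext ?_ ?_
        · rw [hc']
        · rw [hw', hnx]
    have hplay : IsPlay (bE.{u} u₁ u₂ d) pB colB := by
      intro k
      have h9 := hval [] (pB k) trivial
      have h8 := hstep k
      rw [hpos (histPref pB colB k) [] (pB k)] at h8
      rw [show colB k = (σ [] (pB k)).1 from (congrArg Prod.fst h8).symm,
          show pB (k+1) = (σ [] (pB k)).2 from (congrArg Prod.snd h8).symm]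
      exact h9
    have hconsB : ConsistentPlay (fun _ => True) σ pB colB := by
      intro k _
      exact (hstep k).symm
    have h0B : pB 0 = bstar := by simp [hpB]
    have := hwin pB colB hplay h0B hconsB
    have hcw : colB = wpow u₂ d := rfl
    rwa [hcw] at this

end S11
namespace S11
variable {C : Type}

theorem ne_nil_of_length_pos' {l : List C} (h : 0 < l.length) : l ≠ [] := by
  intro hc; rw [hc] at h; simp at h

theorem rep_append_ne {k : ℕ} (hk : 1 ≤ k) (e : C) (v₂ : List C) :
    List.replicate k e ++ v₂ ≠ [] := by
  apply ne_nil_of_length_pos'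
  simp; omega

theorem getD_replicate_self (k m : ℕ) (e : C) : (List.replicate k e).getD m e = e := by
  by_cases h : m < k
  · rw [List.getD_eq_getElem _ _ (by simpa using h)]
    simp
  · rw [List.getD_eq_default _ _ (by simpa using h)]

/-- The key doubling induction: a loop starting with `k ≥ M / 2^j` copies of a good
letter `e` has its `ω`-power in `W`. -/
theorem down_induction {W : Set (ℕ → C)} (hpi : PrefixIndependent W)
    (hHP : HalfPositionalAll.{u} W) (M : ℕ)
    (hBLOCK : ∀ u : ℕ → C,
      (∀ N, ∃ n ≥ N, (∀ i < M, u (n + i) = u n) ∧ (fun _ => u n) ∈ W) → u ∈ W) :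
    ∀ (j k : ℕ), 1 ≤ k → M ≤ k * 2 ^ j → ∀ (v₂ : List C) (e : C), (fun _ => e) ∈ W →
      wpow (List.replicate k e ++ v₂) e ∈ W := by
  intro j
  induction j with
  | zero =>
    intro k hk hM v₂ e he
    have hM' : M ≤ k := by simpa using hM
    apply hBLOCK
    intro N
    have hvne : (List.replicate k e ++ v₂) ≠ [] := rep_append_ne hk e v₂
    have hlen : (List.replicate k e ++ v₂).length = k + v₂.length := by simp
    have h1 : ∀ m, m < k →
        wpow (List.replicate k e ++ v₂) e ((k + v₂.length) * (N+1) + m) = e := by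
      intro m hm
      have hmod : ((k + v₂.length) * (N + 1) + m) % (List.replicate k e ++ v₂).length
          = m := by
        rw [hlen, Nat.mul_add_mod, Nat.mod_eq_of_lt (by omega)]
      show (List.replicate k e ++ v₂).getD
        (((k + v₂.length) * (N + 1) + m) % (List.replicate k e ++ v₂).length) e = e
      rw [hmod, List.getD_append _ _ _ _ (by simpa using hm)]
      exact getD_replicate_self k m e
    have h0 : wpow (List.replicate k e ++ v₂) e ((k + v₂.length) * (N+1)) = e := by
      have := h1 0 (by omega)
      simpa using this
    refine ⟨(k + v₂.length) * (N + 1), ?_, ?_, ?_⟩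
    · have h2 : (N + 1) ≤ (k + v₂.length) * (N + 1) :=
        Nat.le_mul_of_pos_left (N + 1) (by omega)
      omega
    · intro i hi
      rw [h1 i (by omega), h0]
    · rw [h0]; exact he
  | succ j ih =>
    intro k hk hM v₂ e he
    have hM2 : M ≤ 2 * k * 2 ^ j := by
      rw [show 2 * k * 2 ^ j = k * 2 ^ (j+1) by ring]
      exact hM
    have hbig := ih (2 * k) (by omega) hM2 (v₂ ++ v₂) e he
    have hmixeq : (v₂ ++ List.replicate k e) ++ (List.replicate k e ++ v₂)
        = v₂ ++ (List.replicate (2 * k) e ++ v₂) := by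
      simp only [show 2 * k = k + k by ring, List.replicate_add, List.append_assoc]
    have hne1 : v₂ ++ List.replicate k e ≠ [] := by
      apply ne_nil_of_length_pos'; simp; omega
    have hne2 : List.replicate k e ++ v₂ ≠ [] := rep_append_ne hk e v₂
    have hmix : wpow ((v₂ ++ List.replicate k e) ++ (List.replicate k e ++ v₂)) e ∈ W := by
      rw [hmixeq]
      rw [PrefixIndependent.wpow_rot_iff hpi v₂ (List.replicate (2*k) e ++ v₂)
        (by apply ne_nil_of_length_pos'; simp; omega) e]
      rw [List.append_assoc]
      exact hbig
    rcases bouquet hHP (v₂ ++ List.replicate k e) (List.replicate k e ++ v₂) e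
      hne1 hne2 hmix with h | h
    · rwa [PrefixIndependent.wpow_rot_iff hpi v₂ (List.replicate k e)
        (by apply ne_nil_of_length_pos'; simp; omega) e] at h
    · exact h

/-- any loop containing a good letter has its `ω`-power in `W`. -/
theorem good_cycle {W : Set (ℕ → C)} (hpi : PrefixIndependent W)
    (hHP : HalfPositionalAll.{u} W) (M : ℕ)
    (hBLOCK : ∀ u : ℕ → C,
      (∀ N, ∃ n ≥ N, (∀ i < M, u (n + i) = u n) ∧ (fun _ => u n) ∈ W) → u ∈ W)
    (v : List C) (i : ℕ) (hi : i < v.length)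
    (hgood : (fun _ => v[i]'hi) ∈ W) (d : C) : wpow v d ∈ W := by
  have hvne : v ≠ [] := ne_nil_of_length_pos' (by omega)
  have hdrop : v.drop i = v[i]'hi :: v.drop (i+1) := List.drop_eq_getElem_cons hi
  have h1 : wpow (v.drop i ++ v.take i) (v[i]'hi) ∈ W := by
    have heq : v.drop i ++ v.take i
        = List.replicate 1 (v[i]'hi) ++ (v.drop (i+1) ++ v.take i) := by
      rw [hdrop]
      rfl
    rw [heq]
    exact down_induction hpi hHP M hBLOCK M 1 (by omega)
      (by simpa using (Nat.lt_two_pow_self (n := M)).le) _ _ hgood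
  have h2 : wpow (v.take i ++ v.drop i) (v[i]'hi) ∈ W := by
    rw [PrefixIndependent.wpow_rot_iff hpi (v.take i) (v.drop i)
      (by rw [List.take_append_drop]; exact hvne) _]
    exact h1
  rw [List.take_append_drop] at h2
  rwa [wpow_d_irrel hvne d (v[i]'hi)]

/-- THE CHARACTERIZATION: a prefix-independent DBA-recognizable half-positional
objective is a Büchi condition. -/
theorem char_buchi {W : Set (ℕ → C)} (hpi : PrefixIndependent W) (hdba : DBARecognizable W)
    (hHP : HalfPositionalAll.{u} W) : W = BuchiCond {c | (fun _ => c) ∈ W} := by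
  obtain ⟨Q, iQ, q0, δ, acc, hrec⟩ := hdba
  haveI := iQ
  ext s
  constructor
  · intro hs N
    obtain ⟨n, hn, hc⟩ := good_letter_of_mem hpi hHP hs N
    exact ⟨n, hn, hc⟩
  · intro hs
    by_contra hcon
    obtain ⟨v, d, hvne, ⟨i, hi, hgood⟩, hbad⟩ :=
      exists_bad_cycle (F := {c | (fun _ => c) ∈ W}) hrec hpi s hcon hs
    exact hbad (good_cycle hpi hHP (2 * Fintype.card Q)
      (fun u hu => block hrec hpi u hu) v i hi hgood d)

end S11
namespace S11
variable {C : Type} {V : Type u}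

section BuchiPos

variable (F : Set C) (E : Set (V × C × V)) (own1 : V → Prop)

/-- vertices from which Player 1 has some winning strategy. -/
def Ywin : Set V :=
  {v | ∃ τ : Strat C V, ValidStrat E own1 τ ∧ WinningFrom (BuchiCond F) E own1 τ v}

/-- a good edge: an `F`-coloured edge leading back into the winning region. -/
def goodE (v : V) (c : C) (v' : V) : Prop :=
  (v, c, v') ∈ E ∧ c ∈ F ∧ v' ∈ Ywin F E own1

/-- one step of the attractor operator towards good edges. -/
def Phi (S : Set V) : Set V :=
  {v | (own1 v → ∃ c v', (v, c, v') ∈ E ∧ (goodE F E own1 v c v' ∨ v' ∈ S)) ∧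
       (¬ own1 v → ∀ c v', (v, c, v') ∈ E → goodE F E own1 v c v' ∨ v' ∈ S)}

/-- transfinite stages of the attractor. -/
noncomputable def stage (α : Ordinal.{u}) : Set V :=
  Phi F E own1 (⋃ β : {β : Ordinal.{u} // β < α}, stage β.1)
termination_by α
decreasing_by exact β.2

/-- the attractor. -/
def AttrA : Set V := ⋃ α : Ordinal.{u}, stage F E own1 α

/-- attractor rank. -/
noncomputable def rankA (v : V) : Ordinal.{u} := sInf {α | v ∈ stage F E own1 α}

theorem rank_mem {v : V} (hv : v ∈ AttrA F E own1) : v ∈ stage F E own1 (rankA F E own1 v) := by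
  obtain ⟨S, ⟨α, hα⟩, hS⟩ := hv
  exact csInf_mem (s := {α | v ∈ stage F E own1 α}) ⟨α, by rw [← hα] at hS; exact hS⟩

theorem rank_le {v : V} {α : Ordinal.{u}} (h : v ∈ stage F E own1 α) :
    rankA F E own1 v ≤ α := csInf_le' h

theorem mem_attr_of_stage {v : V} {α : Ordinal.{u}} (h : v ∈ stage F E own1 α) :
    v ∈ AttrA F E own1 := Set.mem_iUnion.2 ⟨α, h⟩

theorem Phi_attr_subset : Phi F E own1 (AttrA F E own1) ⊆ AttrA F E own1 := by
  intro v hv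
  by_cases ho : own1 v
  · obtain ⟨c, v', hE, hgs⟩ := hv.1 ho
    rcases hgs with hg | hA
    · apply mem_attr_of_stage F E own1 (α := 0)
      rw [stage]
      exact ⟨fun _ => ⟨c, v', hE, Or.inl hg⟩, fun h => absurd ho h⟩
    · obtain ⟨β, hβ⟩ := Set.mem_iUnion.1 hA
      apply mem_attr_of_stage F E own1 (α := β + 1)
      rw [stage]
      refine ⟨fun _ => ⟨c, v', hE, Or.inr ?_⟩, fun h => absurd ho h⟩
      exact Set.mem_iUnion.2 ⟨⟨β, Order.lt_succ β⟩, hβ⟩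
  · have hall := hv.2 ho
    set κ := (⨆ e : {e : V × C × V // e ∈ E ∧ e.1 = v},
      rankA F E own1 e.1.2.2 + 1) with hκ
    apply mem_attr_of_stage F E own1 (α := κ)
    rw [stage]
    refine ⟨fun h => absurd h ho, fun _ => ?_⟩
    intro c v' hE
    rcases hall c v' hE with hg | hA
    · exact Or.inl hg
    · refine Or.inr (Set.mem_iUnion.2 ⟨⟨rankA F E own1 v', ?_⟩, rank_mem F E own1 hA⟩)
      have h1 : rankA F E own1 v' + 1 ≤ κ := by
        rw [hκ]
        exact le_ciSup (Ordinal.bddAbove_range _) (⟨(v, c, v'), hE, rfl⟩ :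
          {e : V × C × V // e ∈ E ∧ e.1 = v})
      exact lt_of_lt_of_le (Order.lt_succ _) h1

theorem stepP1 {v : V} (hv : v ∈ AttrA F E own1) (ho : own1 v) :
    ∃ pr : C × V, (v, pr.1, pr.2) ∈ E ∧ (goodE F E own1 v pr.1 pr.2 ∨
      (pr.2 ∈ AttrA F E own1 ∧ rankA F E own1 pr.2 < rankA F E own1 v)) := by
  have h1 := rank_mem F E own1 hv
  rw [stage] at h1
  obtain ⟨c, v', hE, hgs⟩ := h1.1 ho
  rcases hgs with hg | hA
  · exact ⟨(c, v'), hE, Or.inl hg⟩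
  · obtain ⟨⟨β, hβ⟩, hmem⟩ := Set.mem_iUnion.1 hA
    exact ⟨(c, v'), hE, Or.inr ⟨mem_attr_of_stage F E own1 hmem,
      lt_of_le_of_lt (rank_le F E own1 hmem) hβ⟩⟩

theorem stepP2 {v : V} (hv : v ∈ AttrA F E own1) (ho : ¬ own1 v) :
    ∀ c v', (v, c, v') ∈ E → goodE F E own1 v c v' ∨
      (v' ∈ AttrA F E own1 ∧ rankA F E own1 v' < rankA F E own1 v) := by
  have h1 := rank_mem F E own1 hv
  rw [stage] at h1
  intro c v' hE
  rcases h1.2 ho c v' hE with hg | hA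
  · exact Or.inl hg
  · obtain ⟨⟨β, hβ⟩, hmem⟩ := Set.mem_iUnion.1 hA
    exact Or.inr ⟨mem_attr_of_stage F E own1 hmem,
      lt_of_le_of_lt (rank_le F E own1 hmem) hβ⟩

variable (hnb : ∀ v : V, ∃ c v', (v, c, v') ∈ E)

open Classical in
/-- the positional attractor strategy. -/
noncomputable def sigA : Strat C V := fun _ v =>
  if h : own1 v ∧ v ∈ AttrA F E own1 then
    Classical.choose (stepP1 F E own1 h.2 h.1)
  else
    (Classical.choose (hnb v), Classical.choose (Classical.choose_spec (hnb v)))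

theorem sigA_pos : PositionalStrat (sigA F E own1 hnb) := fun _ _ _ => rfl

theorem sigA_valid : ValidStrat E own1 (sigA F E own1 hnb) := by
  intro h v ho
  by_cases hA : v ∈ AttrA F E own1
  · have hd : sigA F E own1 hnb h v = Classical.choose (stepP1 F E own1 hA ho) := by
      simp only [sigA, dif_pos (And.intro ho hA)]
    rw [hd]
    exact (Classical.choose_spec (stepP1 F E own1 hA ho)).1
  · have hd : sigA F E own1 hnb h v
        = (Classical.choose (hnb v), Classical.choose (Classical.choose_spec (hnb v))) := by
      simp only [sigA, dif_neg (fun hc : own1 v ∧ v ∈ AttrA F E own1 => hA hc.2)]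
    rw [hd]
    exact Classical.choose_spec (Classical.choose_spec (hnb v))

end BuchiPos

end S11
namespace S11
variable {C : Type} {V : Type u}

theorem histPref_succ (p : ℕ → V) (col : ℕ → C) (n : ℕ) :
    histPref p col (n+1) = histPref p col n ++ [(p n, col n)] := by
  simp [histPref, List.range_succ]

theorem histPref_congr {p q : ℕ → V} {col col' : ℕ → C} {n : ℕ}
    (h : ∀ i < n, p i = q i ∧ col i = col' i) :
    histPref p col n = histPref q col' n := by
  simp only [histPref]
  apply List.map_congr_left
  intro i hi
  have h2 := h i (List.mem_range.mp hi)
  rw [h2.1, h2.2]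

theorem histPref_add (p : ℕ → V) (col : ℕ → C) (k n : ℕ) :
    histPref p col (k + n)
      = histPref p col k ++ histPref (fun i => p (k + i)) (fun i => col (k + i)) n := by
  simp only [histPref]
  rw [List.range_add, List.map_append, List.map_map]
  rfl

section BuchiPos
variable (F : Set C) (E : Set (V × C × V)) (own1 : V → Prop)

/-- along any play consistent with a winning strategy, all vertices are winning. -/
theorem suffix_in_Ywin {τ : Strat C V} (hτv : ValidStrat E own1 τ) {v : V}
    (hτw : WinningFrom (BuchiCond F) E own1 τ v) {p : ℕ → V} {col : ℕ → C}
    (hplay : IsPlay E p col) (h0 : p 0 = v) (hcons : ConsistentPlay own1 τ p col) (k : ℕ) :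
    p k ∈ Ywin F E own1 := by
  refine ⟨fun h u => τ (histPref p col k ++ h) u, fun h u ho => hτv _ u ho, ?_⟩
  intro p' col' hplay' h0' hcons'
  set pm : ℕ → V := fun n => if n < k then p n else p' (n - k) with hpm
  set colm : ℕ → C := fun n => if n < k then col n else col' (n - k) with hcolm
  have hpmlt : ∀ n, n < k → pm n = p n := fun n hn => if_pos hn
  have hpmge : ∀ n, k ≤ n → pm n = p' (n - k) := fun n hn => if_neg (by omega)
  have hclt : ∀ n, n < k → colm n = col n := fun n hn => if_pos hn
  have hcge : ∀ n, k ≤ n → colm n = col' (n - k) := fun n hn => if_neg (by omega)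
  have hpmk : ∀ n, n ≤ k → pm n = p n := by
    intro n hn
    rcases Nat.lt_or_ge n k with h | h
    · exact hpmlt n h
    · have : n = k := by omega
      subst this
      rw [hpmge n h, Nat.sub_self, h0']
  have hh1 : histPref pm colm k = histPref p col k :=
    histPref_congr (fun i hi => ⟨hpmlt i hi, hclt i hi⟩)
  have hhist : ∀ n, histPref pm colm (k + n) = histPref p col k ++ histPref p' col' n := by
    intro n
    rw [histPref_add, hh1]
    congr 1
    apply histPref_congr
    intro i _
    constructor
    · rw [hpmge (k + i) (by omega)]
      congr 1
      omega
    · rw [hcge (k + i) (by omega)]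
      congr 1
      omega
  have hplaym : IsPlay E pm colm := by
    intro n
    rcases Nat.lt_or_ge n k with h | h
    · rw [hpmlt n h, hclt n h, hpmk (n+1) (by omega)]
      exact hplay n
    · rw [hpmge n h, hcge n h, hpmge (n+1) (by omega),
        show n + 1 - k = (n - k) + 1 by omega]
      exact hplay' (n - k)
  have hconsm : ConsistentPlay own1 τ pm colm := by
    intro n ho
    rcases Nat.lt_or_ge n k with h | h
    · have hhn : histPref pm colm n = histPref p col n :=
        histPref_congr (fun i hi => ⟨hpmlt i (by omega), hclt i (by omega)⟩)
      rw [hclt n h, hpmk (n+1) (by omega), hhn, hpmlt n h]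
      exact hcons n (by rwa [hpmlt n h] at ho)
    · have hn : n = k + (n - k) := by omega
      have hgoal : histPref pm colm n = histPref p col k ++ histPref p' col' (n - k) := by
        have h9 := hhist (n - k)
        rw [← hn] at h9
        exact h9
      rw [hcge n h, hpmge (n+1) (by omega), show n + 1 - k = (n - k) + 1 by omega,
        hgoal, hpmge n h]
      have ho' : own1 (p' (n - k)) := by rwa [hpmge n h] at ho
      exact hcons' (n - k) ho'
  have hm0 : pm 0 = v := by rw [hpmk 0 (by omega), h0]
  have hBm := hτw pm colm hplaym hm0 hconsm
  intro N
  obtain ⟨n, hn, hF⟩ := hBm (k + N)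
  refine ⟨n - k, by omega, ?_⟩
  rw [← hcge n (by omega)]
  exact hF

end BuchiPos
end S11
namespace S11
variable {C : Type} {V : Type u}

section BuchiPos
variable (F : Set C) (E : Set (V × C × V)) (own1 : V → Prop)
variable (hnb : ∀ v : V, ∃ c v', (v, c, v') ∈ E)

open Classical in
/-- one step of the escape play: at P1 vertices follow `τ`, at P2 vertices pick
a non-good edge staying outside the attractor whenever possible. -/
noncomputable def stepPair (τ : Strat C V) : List (V × C) × V → C × V := fun hu =>
  if own1 hu.2 then τ hu.1 hu.2
  else if hbad : ∃ pr : C × V, (hu.2, pr.1, pr.2) ∈ E ∧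
      ¬ goodE F E own1 hu.2 pr.1 pr.2 ∧ pr.2 ∉ AttrA F E own1 then
    Classical.choose hbad
  else (Classical.choose (hnb hu.2), Classical.choose (Classical.choose_spec (hnb hu.2)))

noncomputable def auxSeq (τ : Strat C V) (v : V) : ℕ → List (V × C) × V
  | 0 => ([], v)
  | n+1 =>
    ((auxSeq τ v n).1 ++ [((auxSeq τ v n).2, (stepPair F E own1 hnb τ (auxSeq τ v n)).1)],
     (stepPair F E own1 hnb τ (auxSeq τ v n)).2)

include hnb in
theorem Ywin_subset_attr : Ywin F E own1 ⊆ AttrA F E own1 := by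
  intro v hv
  by_contra hvA
  obtain ⟨τ, hτv, hτw⟩ := hv
  have hp1bad : ∀ u, own1 u → u ∉ AttrA F E own1 → ∀ c v', (u, c, v') ∈ E →
      ¬ goodE F E own1 u c v' ∧ v' ∉ AttrA F E own1 := by
    intro u ho hA c v' hE
    have h1 : u ∉ Phi F E own1 (AttrA F E own1) :=
      fun hc => hA (Phi_attr_subset F E own1 hc)
    have hc2 : ¬ own1 u → ∀ c v', (u, c, v') ∈ E →
        goodE F E own1 u c v' ∨ v' ∈ AttrA F E own1 := fun hno => absurd ho hno
    have hnex : ¬ ∃ c v', (u, c, v') ∈ E ∧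
        (goodE F E own1 u c v' ∨ v' ∈ AttrA F E own1) := by
      intro hex
      exact h1 ⟨fun _ => hex, hc2⟩
    push_neg at hnex
    exact hnex c v' hE
  have hbadex : ∀ u, ¬ own1 u → u ∉ AttrA F E own1 →
      ∃ pr : C × V, (u, pr.1, pr.2) ∈ E ∧ ¬ goodE F E own1 u pr.1 pr.2 ∧
        pr.2 ∉ AttrA F E own1 := by
    intro u ho hA
    have h1 : u ∉ Phi F E own1 (AttrA F E own1) :=
      fun hc => hA (Phi_attr_subset F E own1 hc)
    have hc1 : own1 u → ∃ c v', (u, c, v') ∈ E ∧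
        (goodE F E own1 u c v' ∨ v' ∈ AttrA F E own1) := fun h => absurd h ho
    have hnall : ¬ ∀ c v', (u, c, v') ∈ E →
        (goodE F E own1 u c v' ∨ v' ∈ AttrA F E own1) :=
      fun hall => h1 ⟨hc1, fun _ => hall⟩
    push_neg at hnall
    obtain ⟨c, v', hE, hng⟩ := hnall
    exact ⟨(c, v'), hE, hng.1, hng.2⟩
  set p : ℕ → V := fun n => (auxSeq F E own1 hnb τ v n).2 with hp
  set col : ℕ → C := fun n => (stepPair F E own1 hnb τ (auxSeq F E own1 hnb τ v n)).1
    with hcol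
  have hsucc2 : ∀ n, p (n+1) = (stepPair F E own1 hnb τ (auxSeq F E own1 hnb τ v n)).2 :=
    fun n => rfl
  have hhist : ∀ n, (auxSeq F E own1 hnb τ v n).1 = histPref p col n := by
    intro n
    induction n with
    | zero => rfl
    | succ n ih =>
      have h9 : (auxSeq F E own1 hnb τ v (n+1)).1
          = (auxSeq F E own1 hnb τ v n).1 ++ [(p n, col n)] := rfl
      rw [h9, histPref_succ, ih]
  have hstep_own : ∀ n, own1 (p n) →
      stepPair F E own1 hnb τ (auxSeq F E own1 hnb τ v n)
        = τ (histPref p col n) (p n) := by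
    intro n ho
    have h9 : stepPair F E own1 hnb τ (auxSeq F E own1 hnb τ v n)
        = τ (auxSeq F E own1 hnb τ v n).1 (p n) := by
      simp only [stepPair]
      exact if_pos ho
    rw [h9, hhist n]
  have hstep_p2 : ∀ n, ¬ own1 (p n) → p n ∉ AttrA F E own1 →
      (p n, col n, p (n+1)) ∈ E ∧ ¬ goodE F E own1 (p n) (col n) (p (n+1)) ∧
        p (n+1) ∉ AttrA F E own1 := by
    intro n ho hA
    have hbad := hbadex (p n) ho hA
    have h9 : stepPair F E own1 hnb τ (auxSeq F E own1 hnb τ v n)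
        = Classical.choose hbad := by
      simp only [stepPair]
      exact (if_neg ho).trans (dif_pos hbad)
    have hspec := Classical.choose_spec hbad
    rw [show col n = (stepPair F E own1 hnb τ (auxSeq F E own1 hnb τ v n)).1 from rfl,
        hsucc2 n, h9]
    exact hspec
  have hinv : ∀ n, p n ∉ AttrA F E own1 := by
    intro n
    induction n with
    | zero => exact hvA
    | succ n ih =>
      by_cases ho : own1 (p n)
      · rw [hsucc2 n, hstep_own n ho]
        exact (hp1bad (p n) ho ih _ _ (hτv (histPref p col n) (p n) ho)).2
      · exact (hstep_p2 n ho ih).2.2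
  have hplay : IsPlay E p col := by
    intro n
    by_cases ho : own1 (p n)
    · rw [show col n = (stepPair F E own1 hnb τ (auxSeq F E own1 hnb τ v n)).1 from rfl,
          hsucc2 n, hstep_own n ho]
      exact hτv (histPref p col n) (p n) ho
    · exact (hstep_p2 n ho (hinv n)).1
  have hnogood : ∀ n, ¬ goodE F E own1 (p n) (col n) (p (n+1)) := by
    intro n
    by_cases ho : own1 (p n)
    · rw [show col n = (stepPair F E own1 hnb τ (auxSeq F E own1 hnb τ v n)).1 from rfl,
          hsucc2 n, hstep_own n ho]
      exact (hp1bad (p n) ho (hinv n) _ _ (hτv (histPref p col n) (p n) ho)).1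
    · exact (hstep_p2 n ho (hinv n)).2.1
  have hcons : ConsistentPlay own1 τ p col := by
    intro n ho
    have h8 := hstep_own n ho
    show (col n, p (n+1)) = _
    rw [show col n = (stepPair F E own1 hnb τ (auxSeq F E own1 hnb τ v n)).1 from rfl,
        hsucc2 n, ← h8]
  have hbw := hτw p col hplay rfl hcons
  obtain ⟨k, _, hkF⟩ := hbw 0
  have hYk := suffix_in_Ywin F E own1 hτv hτw hplay rfl hcons (k+1)
  exact hnogood k ⟨hplay k, hkF, hYk⟩

end BuchiPos
end S11
namespace S11
variable {C : Type} {V : Type u}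

section BuchiPos
variable (F : Set C) (E : Set (V × C × V)) (own1 : V → Prop)
variable (hnb : ∀ v : V, ∃ c v', (v, c, v') ∈ E)

include hnb in
theorem hits (α : Ordinal.{u}) : ∀ (p : ℕ → V) (col : ℕ → C), IsPlay E p col →
    ConsistentPlay own1 (sigA F E own1 hnb) p col → p 0 ∈ AttrA F E own1 →
    rankA F E own1 (p 0) = α → ∃ k, col k ∈ F ∧ p (k+1) ∈ Ywin F E own1 := by
  induction α using Ordinal.induction with
  | h α IH =>
    intro p col hplay hcons hA hr
    by_cases ho : own1 (p 0)
    · have hc := hcons 0 ho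
      have hσ : sigA F E own1 hnb (histPref p col 0) (p 0)
          = Classical.choose (stepP1 F E own1 hA ho) := by
        simp only [sigA, dif_pos (And.intro ho hA)]
      rw [hσ] at hc
      have hspec := Classical.choose_spec (stepP1 F E own1 hA ho)
      have hcol0 : col 0 = (Classical.choose (stepP1 F E own1 hA ho)).1 :=
        congrArg Prod.fst hc
      have hp1 : p 1 = (Classical.choose (stepP1 F E own1 hA ho)).2 :=
        congrArg Prod.snd hc
      rcases hspec.2 with hg | ⟨hA1, hlt⟩
      · exact ⟨0, by rw [hcol0]; exact hg.2.1, by rw [hp1]; exact hg.2.2⟩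
      · have hplay' : IsPlay E (fun n => p (n+1)) (fun n => col (n+1)) :=
          fun n => hplay (n+1)
        have hcons' : ConsistentPlay own1 (sigA F E own1 hnb)
            (fun n => p (n+1)) (fun n => col (n+1)) := by
          intro n hon
          exact hcons (n+1) hon
        have hA' : p 1 ∈ AttrA F E own1 := by rw [hp1]; exact hA1
        have hr' : rankA F E own1 (p 1) < α := by
          rw [hp1, ← hr]; exact hlt
        obtain ⟨k, hk1, hk2⟩ := IH _ hr' _ _ hplay' hcons' hA' rfl
        exact ⟨k+1, hk1, hk2⟩
    · have hed := hplay 0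
      rcases stepP2 F E own1 hA ho (col 0) (p 1) hed with hg | ⟨hA1, hlt⟩
      · exact ⟨0, hg.2.1, hg.2.2⟩
      · have hplay' : IsPlay E (fun n => p (n+1)) (fun n => col (n+1)) :=
          fun n => hplay (n+1)
        have hcons' : ConsistentPlay own1 (sigA F E own1 hnb)
            (fun n => p (n+1)) (fun n => col (n+1)) := by
          intro n hon
          exact hcons (n+1) hon
        have hr' : rankA F E own1 (p 1) < α := by rw [← hr]; exact hlt
        obtain ⟨k, hk1, hk2⟩ := IH _ hr' _ _ hplay' hcons' hA1 rfl
        exact ⟨k+1, hk1, hk2⟩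

end BuchiPos

/-- MAIN POSITIONALITY THEOREM: every Büchi condition is half-positional over
all arenas. -/
theorem buchi_halfpos (F : Set C) : HalfPositionalAll.{u} (BuchiCond F) := by
  intro V E own1 hnb
  refine ⟨sigA F E own1 hnb, sigA_valid F E own1 hnb, sigA_pos F E own1 hnb, ?_⟩
  intro v hv p col hplay h0 hcons
  have hvY : v ∈ Ywin F E own1 := hv
  have hYsub := Ywin_subset_attr F E own1 hnb
  have hshift : ∀ n, p n ∈ Ywin F E own1 →
      ∃ k, col (n + k) ∈ F ∧ p (n + (k+1)) ∈ Ywin F E own1 := by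
    intro n hY
    have hplay' : IsPlay E (fun m => p (n + m)) (fun m => col (n + m)) := by
      intro m
      show (p (n+m), col (n+m), p (n+(m+1))) ∈ E
      rw [show n + (m+1) = (n+m)+1 by omega]
      exact hplay (n+m)
    have hcons' : ConsistentPlay own1 (sigA F E own1 hnb)
        (fun m => p (n + m)) (fun m => col (n + m)) := by
      intro m hom
      show (col (n+m), p (n+(m+1))) = _
      rw [show n+(m+1) = (n+m)+1 by omega]
      exact hcons (n+m) hom
    obtain ⟨k, hk1, hk2⟩ := hits F E own1 hnb
      (rankA F E own1 (p (n + 0))) _ _ hplay' hcons' (hYsub hY) rfl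
    exact ⟨k, hk1, hk2⟩
  have haux : ∀ N, ∃ n ≥ N, p n ∈ Ywin F E own1 := by
    intro N
    induction N with
    | zero => exact ⟨0, le_rfl, by rw [h0]; exact hvY⟩
    | succ N ih =>
      obtain ⟨n, hn, hY⟩ := ih
      obtain ⟨k, _, hk2⟩ := hshift n hY
      exact ⟨n + (k+1), by omega, hk2⟩
  intro N
  obtain ⟨n, hn, hY⟩ := haux N
  obtain ⟨k, hk1, _⟩ := hshift n hY
  exact ⟨n + k, by omega, hk1⟩

end S11
namespace S11
variable {C : Type}

theorem buchi_union (F₁ F₂ : Set C) :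
    BuchiCond F₁ ∪ BuchiCond F₂ = BuchiCond (F₁ ∪ F₂) := by
  ext s
  constructor
  · rintro (hs | hs) N
    · obtain ⟨n, hn, hF⟩ := hs N
      exact ⟨n, hn, Or.inl hF⟩
    · obtain ⟨n, hn, hF⟩ := hs N
      exact ⟨n, hn, Or.inr hF⟩
  · intro hs
    by_contra hcon
    rw [Set.mem_union] at hcon
    push_neg at hcon
    obtain ⟨h1, h2⟩ := hcon
    have h1' : ∃ N₁, ∀ n ≥ N₁, s n ∉ F₁ := by
      by_contra hc; push_neg at hc; exact h1 fun N => hc N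
    have h2' : ∃ N₂, ∀ n ≥ N₂, s n ∉ F₂ := by
      by_contra hc; push_neg at hc; exact h2 fun N => hc N
    obtain ⟨N₁, hN₁⟩ := h1'
    obtain ⟨N₂, hN₂⟩ := h2'
    obtain ⟨n, hn, hF⟩ := hs (max N₁ N₂)
    rcases hF with hF | hF
    · exact hN₁ n (le_trans (le_max_left _ _) hn) hF
    · exact hN₂ n (le_trans (le_max_right _ _) hn) hF

theorem buchi_dba (F : Set C) : DBARecognizable (BuchiCond F) := by
  refine ⟨Unit, inferInstance, (), fun q _ => q, fun _ c => c ∈ F, ?_⟩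
  rfl

end S11


/-- prefix-independent DBA-recognizable half-positional objectives are
closed under (finite) union. -/
theorem stmt11 {C : Type} (W₁ W₂ : Set (ℕ → C))
    (h₁ : PrefixIndependent W₁ ∧ DBARecognizable W₁ ∧ HalfPositionalAll.{u} W₁)
    (h₂ : PrefixIndependent W₂ ∧ DBARecognizable W₂ ∧ HalfPositionalAll.{u} W₂) :
    PrefixIndependent (W₁ ∪ W₂) ∧ DBARecognizable (W₁ ∪ W₂) ∧
      HalfPositionalAll.{u} (W₁ ∪ W₂) := by
  obtain ⟨hpi₁, hdba₁, hhp₁⟩ := h₁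
  obtain ⟨hpi₂, hdba₂, hhp₂⟩ := h₂
  have hc₁ := S11.char_buchi hpi₁ hdba₁ hhp₁
  have hc₂ := S11.char_buchi hpi₂ hdba₂ hhp₂
  refine ⟨?_, ?_, ?_⟩
  · intro w s
    rw [Set.mem_union, Set.mem_union, hpi₁ w s, hpi₂ w s]
  · rw [hc₁, hc₂, S11.buchi_union]
    exact S11.buchi_dba _
  · rw [hc₁, hc₂, S11.buchi_union]
    exact S11.buchi_halfpos _
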